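/- Let β, x₁,…,x_d, b₁, b₂,… be independent indeterminates and work in the ring of formal power series over ℤ in these variables (where each 1+βx_i is invertible). For a partition-like integer vector a = (a₁,…,a_d) ∈ ℤ^d with a_i + d - i ≥ 0 for every i, the following determinant identity holds: det( [x_j|b]^{a_i+d-i} (1+βx_j)^{i-1} )_{1≤i,j≤d} = (∏_{1≤i<j≤d} (x_i - x_j)) · det( Σ_{s≥0} C(i-d, s) β^s G^{(a_i+d-i)}_{a_i+j-i+s} )_{1≤i,j≤d}, where C(n,s) denotes the generalized binomial coefficient defined by (1+x)^n = Σ_{s≥0} C(n,s) x^s for n ∈ ℤ (so C(n,s) = (-1)^s C(s-n-1, s) for n < 0), and the infinite sums over s converge in the formal power series topology. -/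

import Mathlib

open scoped BigOperators

namespace GrothDet

/-- Index type for the indeterminates: `β`, `x₁,…,x_d`, `b₁,b₂,…`. -/
abbrev Idx (d : ℕ) := Unit ⊕ Fin d ⊕ ℕ

/-- The ambient ring: formal power series over `ℤ` in `β`, the `xᵢ` and the `bⱼ`. -/
abbrev R (d : ℕ) := MvPowerSeries (Idx d) ℤ

noncomputable def β (d : ℕ) : R d := MvPowerSeries.X (Sum.inl ())
noncomputable def x (d : ℕ) (i : Fin d) : R d := MvPowerSeries.X (Sum.inr (Sum.inl i))
noncomputable def b (d : ℕ) (ℓ : ℕ) : R d := MvPowerSeries.X (Sum.inr (Sum.inr ℓ))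

/-- `x ⊕ y := x + y + βxy`. -/
noncomputable def oplus (d : ℕ) (u v : R d) : R d := u + v + β d * u * v

/-- `[y|b]^k := (y ⊕ b₁)⋯(y ⊕ b_k)`. -/
noncomputable def fb (d : ℕ) (y : R d) (k : ℕ) : R d :=
  ∏ ℓ ∈ Finset.range k, oplus d y (b d ℓ)

/-- The multiplicative inverse of `1 + β * x j` (a unit since its constant term is `1`). -/
noncomputable def invOneAdd (d : ℕ) (j : Fin d) : R d :=
  MvPowerSeries.invOfUnit (1 + β d * x d j) 1

/-- `F^{(k)}(u) = ∏ᵢ (1+βxᵢ)/(1-xᵢu) · ∏_{ℓ=1}^k (1+(u+β)b_ℓ)` as a power series in `u`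
over `R d`; here `(1-xᵢu)⁻¹ = ∑_n xᵢⁿ uⁿ`. -/
noncomputable def F (d : ℕ) (k : ℕ) : PowerSeries (R d) :=
  (∏ i : Fin d,
      PowerSeries.C (1 + β d * x d i) * PowerSeries.mk fun n => x d i ^ n) *
    ∏ ℓ ∈ Finset.range k,
      (1 + (PowerSeries.X + PowerSeries.C (β d)) * PowerSeries.C (b d ℓ))

/-- `[u^t] F^{(k)}(u)`, extended by `0` in negative degrees `t`. -/
noncomputable def Fcoeff (d : ℕ) (k : ℕ) (t : ℤ) : R d :=
  if 0 ≤ t then PowerSeries.coeff t.toNat (F d k) else 0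

/-- The sum `∑_{s≥0} f s` of a family of power series such that `β^s ∣ f s`:
it is defined coefficientwise; on the coefficient of a monomial `n` only the
(finitely many) terms with `s ≤ n(β)` contribute, and the value is the limit of the
partial sums in the formal power series topology. -/
noncomputable def seriesSum (d : ℕ) (f : ℕ → R d) : R d :=
  (fun n => ∑ s ∈ Finset.range (n (Sum.inl ()) + 1), MvPowerSeries.coeff n (f s) :
    (Idx d →₀ ℕ) → ℤ)

/-- `G^{(k)}_m = ∑_{s≥0} (-β)^s [u^{m+s}] F^{(k)}(u)`. -/
noncomputable def G (d : ℕ) (k : ℕ) (m : ℤ) : R d :=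
  seriesSum d fun s => (-β d) ^ s * Fcoeff d k (m + s)

/-- The `p`-th elementary symmetric function of the family `f` restricted to `S`. -/
noncomputable def esym (d : ℕ) (S : Finset (Fin d)) (p : ℕ) (f : Fin d → R d) : R d :=
  ∑ t ∈ S.powersetCard p, ∏ i ∈ t, f i

/-- `x_i/(1+βx_i) = -x̄_i`. -/
noncomputable def xbar (d : ℕ) (i : Fin d) : R d := x d i * invOneAdd d i


open Finset

variable {d : ℕ}

lemma coeff_seriesSum (f : ℕ → R d) (n : Idx d →₀ ℕ) :
    MvPowerSeries.coeff n (seriesSum d f) =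
      ∑ s ∈ Finset.range (n (Sum.inl ()) + 1), MvPowerSeries.coeff n (f s) := rfl

/-- Families whose `s`-th term is divisible by `β^s` (at the level of coefficients). -/
def Bdd (d : ℕ) (f : ℕ → R d) : Prop :=
  ∀ (n : Idx d →₀ ℕ) (s : ℕ), n (Sum.inl ()) < s → MvPowerSeries.coeff n (f s) = 0

lemma coeff_beta_pow_mul {n : Idx d →₀ ℕ} {s : ℕ} (h : n (Sum.inl ()) < s) (y : R d) :
    MvPowerSeries.coeff n (β d ^ s * y) = 0 := by
  rw [MvPowerSeries.coeff_mul]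
  refine Finset.sum_eq_zero fun p hp => ?_
  rw [β, MvPowerSeries.coeff_X_pow, if_neg, zero_mul]
  intro hps
  have h1 : p.1 + p.2 = n := Finset.HasAntidiagonal.mem_antidiagonal.mp hp
  have h2 : p.1 (Sum.inl ()) + p.2 (Sum.inl ()) = n (Sum.inl ()) := by
    rw [← h1]; rfl
  rw [hps] at h2
  simp only [Finsupp.single_eq_same] at h2
  omega

lemma mul_seriesSum (c : R d) {f : ℕ → R d} (hf : Bdd d f) :
    c * seriesSum d f = seriesSum d fun s => c * f s := by
  apply MvPowerSeries.ext; intro n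
  rw [coeff_seriesSum, MvPowerSeries.coeff_mul]
  have key : ∀ p ∈ Finset.HasAntidiagonal.antidiagonal n,
      MvPowerSeries.coeff p.1 c * MvPowerSeries.coeff p.2 (seriesSum d f)
        = ∑ s ∈ Finset.range (n (Sum.inl ()) + 1),
            MvPowerSeries.coeff p.1 c * MvPowerSeries.coeff p.2 (f s) := by
    intro p hp
    have h1 : p.1 + p.2 = n := Finset.HasAntidiagonal.mem_antidiagonal.mp hp
    have h2 : p.2 (Sum.inl ()) ≤ n (Sum.inl ()) := by
      rw [← h1, Finsupp.add_apply]; omega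
    rw [coeff_seriesSum, Finset.mul_sum]
    apply Finset.sum_subset
    · intro s hs
      rw [Finset.mem_range] at hs ⊢
      omega
    · intro s _ hs
      rw [hf p.2 s (by rw [Finset.mem_range] at hs; omega), mul_zero]
  rw [Finset.sum_congr rfl key, Finset.sum_comm]
  exact Finset.sum_congr rfl fun s _ => (MvPowerSeries.coeff_mul _ _ _).symm

lemma seriesSum_sum {ι : Type*} (T : Finset ι) (g : ι → ℕ → R d) :
    ∑ j ∈ T, seriesSum d (g j) = seriesSum d fun s => ∑ j ∈ T, g j s := by
  apply MvPowerSeries.ext; intro n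
  rw [map_sum, coeff_seriesSum]
  simp only [coeff_seriesSum, map_sum]
  exact Finset.sum_comm

lemma seriesSum_add (f g : ℕ → R d) :
    seriesSum d f + seriesSum d g = seriesSum d fun s => f s + g s := by
  apply MvPowerSeries.ext; intro n
  simp only [map_add, coeff_seriesSum, ← Finset.sum_add_distrib]


lemma sum_sum_eq_conv (N : ℕ) (A : ℕ → ℕ → ℤ) (h : ∀ s t, N < s + t → A s t = 0) :
    ∑ s ∈ Finset.range (N+1), ∑ t ∈ Finset.range (N+1), A s t
      = ∑ r ∈ Finset.range (N+1), ∑ s ∈ Finset.range (r+1), A s (r - s) := by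
  have h1 : ∀ r ∈ Finset.range (N+1), ∑ s ∈ Finset.range (r+1), A s (r-s)
      = ∑ p ∈ Finset.HasAntidiagonal.antidiagonal r, A p.1 p.2 :=
    fun r _ => (Finset.Nat.sum_antidiagonal_eq_sum_range_succ A r).symm
  rw [Finset.sum_congr rfl h1]
  have hd : (↑(Finset.range (N+1)) : Set ℕ).PairwiseDisjoint Finset.HasAntidiagonal.antidiagonal := by
    intro a _ b _ hab
    simp only [Function.onFun, Finset.disjoint_left]
    intro p hp hp'
    exact hab (by rw [← Finset.HasAntidiagonal.mem_antidiagonal.mp hp, ← Finset.HasAntidiagonal.mem_antidiagonal.mp hp'])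
  rw [← Finset.sum_biUnion hd, ← Finset.sum_product']
  symm
  apply Finset.sum_subset
  · intro p hp
    simp only [Finset.mem_biUnion] at hp
    obtain ⟨r, hr, hp⟩ := hp
    have h2 := Finset.HasAntidiagonal.mem_antidiagonal.mp hp
    simp only [Finset.mem_range] at hr
    simp only [Finset.mem_product, Finset.mem_range]
    omega
  · intro p hp hnp
    by_cases hle : p.1 + p.2 ≤ N
    · exact absurd (Finset.mem_biUnion.mpr
        ⟨p.1+p.2, Finset.mem_range.mpr (by omega), Finset.HasAntidiagonal.mem_antidiagonal.mpr rfl⟩) hnp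
    · exact h p.1 p.2 (by omega)

lemma chooseConv (q : ℤ) (r : ℕ) :
    ∑ s ∈ Finset.range (r+1), (-1:ℤ)^(r-s) * Ring.choose q s = Ring.choose (q-1) r := by
  induction r with
  | zero => simp
  | succ r ih =>
    rw [Finset.sum_range_succ]
    have h1 : ∀ s ∈ Finset.range (r+1), (-1:ℤ)^(r+1-s) * Ring.choose q s
        = -((-1:ℤ)^(r-s) * Ring.choose q s) := by
      intro s hs
      rw [Finset.mem_range] at hs
      have h2 : r + 1 - s = (r - s) + 1 := by omega
      rw [h2, pow_succ]
      ring
    rw [Finset.sum_congr rfl h1, Finset.sum_neg_distrib, ih]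
    have hp : Ring.choose q (r+1) = Ring.choose (q-1) r + Ring.choose (q-1) (r+1) := by
      have h3 := Ring.choose_succ_succ (q-1) r
      rw [sub_add_cancel] at h3
      exact h3
    simp only [Nat.sub_self, pow_zero, one_mul]
    rw [hp]; ring

lemma esym_zero (S : Finset (Fin d)) (f : Fin d → R d) : esym d S 0 f = 1 := by
  simp [esym]

lemma esym_of_card_lt {S : Finset (Fin d)} {r : ℕ} (h : S.card < r) (f : Fin d → R d) :
    esym d S r f = 0 := by
  rw [esym, Finset.powersetCard_eq_empty.mpr h, Finset.sum_empty]

lemma esym_insert {a : Fin d} {S : Finset (Fin d)} (h : a ∉ S) (r : ℕ) (f : Fin d → R d) :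
    esym d (insert a S) (r+1) f = esym d S (r+1) f + f a * esym d S r f := by
  have hdisj : Disjoint (Finset.powersetCard (r+1) S)
      ((Finset.powersetCard r S).image (insert a)) := by
    rw [Finset.disjoint_left]
    intro T hT hT'
    rw [Finset.mem_powersetCard] at hT
    rw [Finset.mem_image] at hT'
    obtain ⟨T', _, rfl⟩ := hT'
    exact h (hT.1 (Finset.mem_insert_self a T'))
  rw [esym, Finset.powersetCard_succ_insert h, Finset.sum_union hdisj]
  congr 1
  rw [Finset.sum_image, esym, Finset.mul_sum]
  · refine Finset.sum_congr rfl fun T hT => ?_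
    rw [Finset.mem_powersetCard] at hT
    rw [Finset.prod_insert (fun haT => h (hT.1 haT))]
  · intro T1 h1 T2 h2 heq
    rw [Finset.mem_coe, Finset.mem_powersetCard] at h1 h2
    have e1 : a ∉ T1 := fun ha => h (h1.1 ha)
    have e2 : a ∉ T2 := fun ha => h (h2.1 ha)
    rw [← Finset.erase_insert e1, ← Finset.erase_insert e2, heq]


lemma prod_sub_esym (S : Finset (Fin d)) (y : R d) :
    ∏ t ∈ S, (y - x d t) =
      ∑ r ∈ Finset.range (S.card + 1), (-1:R d)^r * esym d S r (x d) * y^(S.card - r) := by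
  induction S using Finset.induction_on with
  | empty => simp [esym_zero]
  | @insert a S ha ih =>
    rw [Finset.prod_insert ha, ih, Finset.card_insert_of_notMem ha]
    set c := S.card with hc
    rw [sub_mul, Finset.mul_sum]
    have e1 : ∑ r ∈ Finset.range (c+1), y * ((-1:R d)^r * esym d S r (x d) * y^(c - r))
        = y^(c+1) + ∑ r ∈ Finset.range c,
            (-1:R d)^(r+1) * esym d S (r+1) (x d) * y^(c - r) := by
      have h0 : ∀ r ∈ Finset.range (c+1),
          y * ((-1:R d)^r * esym d S r (x d) * y^(c - r))
            = (-1:R d)^r * esym d S r (x d) * y^(c + 1 - r) := by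
        intro r hr
        rw [Finset.mem_range] at hr
        have : c + 1 - r = (c - r) + 1 := by omega
        rw [this, pow_succ]
        ring
      rw [Finset.sum_congr rfl h0, Finset.sum_range_succ']
      simp [esym_zero, add_comm]
    have e2 : ∑ r ∈ Finset.range (c+1),
          (-1:R d)^(r+1) * esym d S (r+1) (x d) * y^(c - r)
        = ∑ r ∈ Finset.range c, (-1:R d)^(r+1) * esym d S (r+1) (x d) * y^(c - r) := by
      rw [Finset.sum_range_succ, esym_of_card_lt (by omega) (x d)]
      simp
    have e3 : ∑ r ∈ Finset.range (c+1+1),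
          (-1:R d)^r * esym d (insert a S) r (x d) * y^(c + 1 - r)
        = y^(c+1) + ∑ r ∈ Finset.range (c+1),
            (-1:R d)^(r+1) * (esym d S (r+1) (x d) + x d a * esym d S r (x d)) * y^(c - r) := by
      rw [Finset.sum_range_succ']
      have h0 : ∀ r ∈ Finset.range (c+1), (-1:R d)^(r+1) * esym d (insert a S) (r+1) (x d) * y^(c + 1 - (r+1))
          = (-1:R d)^(r+1) * (esym d S (r+1) (x d) + x d a * esym d S r (x d)) * y^(c - r) := by
        intro r hr
        rw [esym_insert ha, Nat.succ_sub_succ]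
      rw [Finset.sum_congr rfl h0]
      simp [esym_zero, add_comm]
    rw [e3, e1]
    rw [show ∑ r ∈ Finset.range (c+1),
          (-1:R d)^(r+1) * (esym d S (r+1) (x d) + x d a * esym d S r (x d)) * y^(c - r)
        = (∑ r ∈ Finset.range (c+1), (-1:R d)^(r+1) * esym d S (r+1) (x d) * y^(c - r))
          + ∑ r ∈ Finset.range (c+1), (-1:R d)^(r+1) * (x d a * esym d S r (x d)) * y^(c - r) by
      rw [← Finset.sum_add_distrib]; exact Finset.sum_congr rfl fun r _ => by ring]
    rw [e2]
    have e4 : x d a * ∑ r ∈ Finset.range (c+1), (-1:R d)^r * esym d S r (x d) * y^(c - r)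
        = - ∑ r ∈ Finset.range (c+1), (-1:R d)^(r+1) * (x d a * esym d S r (x d)) * y^(c - r) := by
      rw [Finset.mul_sum, ← Finset.sum_neg_distrib]
      exact Finset.sum_congr rfl fun r _ => by rw [pow_succ]; ring
    rw [e4]
    ring

lemma mk_mul_one_sub (c : R d) :
    (PowerSeries.mk fun n => c ^ n) * (1 - PowerSeries.C c * PowerSeries.X) = 1 := by
  apply PowerSeries.ext; intro n
  rw [mul_sub, mul_one, map_sub, ← mul_assoc]
  cases n with
  | zero =>
    simp [PowerSeries.coeff_zero_eq_constantCoeff, map_mul]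
  | succ n =>
    rw [PowerSeries.coeff_succ_mul_X, PowerSeries.coeff_mul_C, PowerSeries.coeff_mk,
      PowerSeries.coeff_mk, PowerSeries.coeff_one, ← pow_succ]
    simp

lemma coeff_prod_one_sub (S : Finset (Fin d)) (r : ℕ) :
    PowerSeries.coeff r (∏ t ∈ S, (1 - PowerSeries.C (x d t) * PowerSeries.X))
      = (-1:R d)^r * esym d S r (x d) := by
  induction S using Finset.induction_on generalizing r with
  | empty =>
    cases r with
    | zero => simp [esym_zero]
    | succ r =>
      rw [Finset.prod_empty, esym_of_card_lt (by simp) (x d), PowerSeries.coeff_one]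
      simp
  | @insert a S ha ih =>
    rw [Finset.prod_insert ha, sub_mul, one_mul, map_sub]
    cases r with
    | zero =>
      have h0 := ih 0
      rw [PowerSeries.coeff_zero_eq_constantCoeff] at h0
      rw [mul_assoc, PowerSeries.coeff_zero_eq_constantCoeff]
      simp only [map_sub, map_mul, PowerSeries.constantCoeff_X, mul_zero, zero_mul,
        PowerSeries.constantCoeff_C, sub_zero, h0]
      rw [esym_zero, esym_zero]
    | succ r =>
      rw [mul_assoc, PowerSeries.coeff_C_mul, mul_comm PowerSeries.X _,
        PowerSeries.coeff_succ_mul_X, ih, ih, esym_insert ha, pow_succ]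
      ring

lemma prod_mk_mul_Q (l : Fin d) :
    (∏ i : Fin d, PowerSeries.mk fun n => x d i ^ n) *
        ∏ t ∈ Finset.univ.erase l, (1 - PowerSeries.C (x d t) * PowerSeries.X)
      = PowerSeries.mk fun n => x d l ^ n := by
  rw [← Finset.mul_prod_erase Finset.univ _ (Finset.mem_univ l), mul_assoc,
    ← Finset.prod_mul_distrib,
    Finset.prod_congr rfl (fun t _ => mk_mul_one_sub (x d t)), Finset.prod_const_one, mul_one]

lemma F_eq (k : ℕ) :
    F d k = PowerSeries.C (∏ i, (1 + β d * x d i)) *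
      ((∏ i : Fin d, PowerSeries.mk fun n => x d i ^ n) *
       ∏ ℓ ∈ Finset.range k,
         (1 + (PowerSeries.X + PowerSeries.C (β d)) * PowerSeries.C (b d ℓ))) := by
  rw [F, Finset.prod_mul_distrib, ← map_prod, mul_assoc]


/-- `Q_l(u) = ∏_{t ≠ l} (1 - x_t u)`. -/
noncomputable def Qs (d : ℕ) (l : Fin d) : PowerSeries (R d) :=
  ∏ t ∈ Finset.univ.erase l, (1 - PowerSeries.C (x d t) * PowerSeries.X)

lemma card_erase (l : Fin d) : (Finset.univ.erase l).card = d - 1 := by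
  rw [Finset.card_erase_of_mem (Finset.mem_univ l), Finset.card_univ, Fintype.card_fin]

lemma bridge (k : ℕ) (l : Fin d) (M : ℤ) (hM : 0 ≤ M) :
    ∑ r ∈ Finset.range d, (-1:R d)^r * esym d (Finset.univ.erase l) r (x d) * Fcoeff d k (M - r)
      = PowerSeries.coeff M.toNat (F d k * Qs d l) := by
  have hd : 0 < d := l.pos
  set n := M.toNat with hn
  have hMn : (n : ℤ) = M := Int.toNat_of_nonneg hM
  rw [PowerSeries.coeff_mul]
  have hswap := Finset.Nat.sum_antidiagonal_swap
    (f := fun p : ℕ × ℕ =>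
      PowerSeries.coeff p.1 (F d k) * PowerSeries.coeff p.2 (Qs d l)) (n := n)
  simp only [Prod.fst_swap, Prod.snd_swap] at hswap
  rw [← hswap, Finset.Nat.sum_antidiagonal_eq_sum_range_succ
    (fun a c => PowerSeries.coeff c (F d k) * PowerSeries.coeff a (Qs d l)) n]
  have hcoQ : ∀ r, PowerSeries.coeff r (Qs d l)
      = (-1:R d)^r * esym d (Finset.univ.erase l) r (x d) := fun r => coeff_prod_one_sub _ r
  calc ∑ r ∈ Finset.range d, (-1:R d)^r * esym d (Finset.univ.erase l) r (x d) * Fcoeff d k (M - r)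
      = ∑ r ∈ Finset.range (min d (n+1)),
          (-1:R d)^r * esym d (Finset.univ.erase l) r (x d) * Fcoeff d k (M - r) := by
        refine (Finset.sum_subset (Finset.range_subset_range.mpr (min_le_left _ _)) ?_).symm
        intro r hr hnr
        rw [Finset.mem_range] at hr
        rw [Finset.mem_range] at hnr
        have hneg : M - r < 0 := by omega
        rw [Fcoeff, if_neg (by omega), mul_zero]
    _ = ∑ r ∈ Finset.range (min d (n+1)),
          PowerSeries.coeff (n-r) (F d k) * PowerSeries.coeff r (Qs d l) := by
        refine Finset.sum_congr rfl fun r hr => ?_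
        rw [Finset.mem_range] at hr
        rw [hcoQ r, Fcoeff, if_pos (by omega)]
        have : (M - r).toNat = n - r := by omega
        rw [this, mul_comm]
    _ = ∑ r ∈ Finset.range (n+1),
          PowerSeries.coeff (n-r) (F d k) * PowerSeries.coeff r (Qs d l) := by
        refine Finset.sum_subset (Finset.range_subset_range.mpr (min_le_right _ _)) ?_
        intro r hr hnr
        rw [Finset.mem_range] at hr
        rw [Finset.mem_range] at hnr
        rw [hcoQ r, esym_of_card_lt (by rw [card_erase]; omega) (x d), mul_zero, mul_zero]

lemma Fexpand (l : Fin d) (k : ℕ) : ∀ M : ℤ, (k:ℤ) ≤ M →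
    ∑ r ∈ Finset.range d, (-1:R d)^r * esym d (Finset.univ.erase l) r (x d) * Fcoeff d k (M - r)
      = (∏ t, (1 + β d * x d t)) * (x d l ^ (M - k).toNat * fb d (x d l) k) := by
  induction k with
  | zero =>
    intro M hM
    rw [bridge 0 l M (by exact_mod_cast hM)]
    have hF : F d 0 * Qs d l = PowerSeries.C (∏ i, (1 + β d * x d i)) *
        PowerSeries.mk fun n => x d l ^ n := by
      rw [F_eq, Finset.range_zero, Finset.prod_empty, mul_one, mul_assoc, Qs,
        prod_mk_mul_Q l]
    rw [hF]
    have : (PowerSeries.C) (∏ i, (1 + β d * x d i)) * PowerSeries.mk (fun n => x d l ^ n)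
        = PowerSeries.mk (fun n => x d l ^ n) * PowerSeries.C (∏ i, (1 + β d * x d i)) :=
      mul_comm _ _
    rw [this, PowerSeries.coeff_mul_C, PowerSeries.coeff_mk]
    simp only [fb, Finset.range_zero, Finset.prod_empty, mul_one, Nat.cast_zero, sub_zero]
    rw [mul_comm]
  | succ k ih =>
    intro M hM
    have hkM : ((k:ℤ)+1) ≤ M := by exact_mod_cast hM
    have hM0 : 0 ≤ M := by omega
    have hM10 : 0 ≤ M - 1 := by omega
    rw [bridge (k+1) l M hM0]
    have hFsucc : F d (k+1) * Qs d l = (F d k * Qs d l) +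
        ((F d k * Qs d l) * PowerSeries.X) * PowerSeries.C (b d k)
        + (F d k * Qs d l) * PowerSeries.C (β d * b d k) := by
      have h1 : F d (k+1) = F d k *
          (1 + (PowerSeries.X + PowerSeries.C (β d)) * PowerSeries.C (b d k)) := by
        rw [F, F, Finset.prod_range_succ, ← mul_assoc]
      rw [h1, map_mul]
      ring
    have hnn : M.toNat = (M-1).toNat + 1 := by omega
    rw [hFsucc, map_add, map_add, PowerSeries.coeff_mul_C, PowerSeries.coeff_mul_C, hnn,
      PowerSeries.coeff_succ_mul_X]
    rw [← bridge k l (M-1) hM10, ← hnn, ← bridge k l M (by omega)]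
    have hee : ∀ r : ℕ, M - 1 - (r:ℤ) = M - r - 1 := fun r => by ring
    rw [ih M (by omega), ih (M-1) (by omega)]
    set A := ∏ t, (1 + β d * x d t)
    have ht1 : (M - (k:ℤ)).toNat = (M - ((k:ℕ)+1:ℕ)).toNat + 1 := by
      push_cast
      omega
    have ht2 : (M - 1 - (k:ℤ)).toNat = (M - ((k:ℕ)+1:ℕ)).toNat := by
      push_cast
      omega
    rw [ht1, ht2]
    set m2 := (M - ((k:ℕ)+1:ℕ)).toNat
    rw [show fb d (x d l) (k+1) = fb d (x d l) k * oplus d (x d l) (b d k) by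
      rw [fb, fb, Finset.prod_range_succ]]
    rw [oplus, pow_succ]
    ring


lemma Bdd_smul_beta_pow (c : ℕ → ℤ) (y : ℕ → R d) :
    Bdd d (fun s => c s • (β d ^ s * y s)) := by
  intro n s hs
  rw [map_smul, coeff_beta_pow_mul hs, smul_zero]

lemma Bdd_G (k : ℕ) (m : ℤ) : Bdd d (fun t => (-β d)^t * Fcoeff d k (m + t)) := by
  intro n t ht
  show MvPowerSeries.coeff n ((-β d)^t * Fcoeff d k (m + t)) = 0
  have h1 : (-β d)^t * Fcoeff d k (m+t) = ((-1:ℤ)^t) • (β d ^ t * Fcoeff d k (m+t)) := by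
    rw [zsmul_eq_mul, Int.cast_pow, Int.cast_neg, Int.cast_one, neg_pow]
    ring
  rw [h1, map_smul, coeff_beta_pow_mul ht, smul_zero]

lemma Hent_eq (k : ℕ) (q m : ℤ) :
    (seriesSum d fun s => Ring.choose q s • (β d ^ s * G d k (m + s)))
      = seriesSum d fun s => Ring.choose (q-1) s • (β d ^ s * Fcoeff d k (m + s)) := by
  apply MvPowerSeries.ext; intro n
  rw [coeff_seriesSum, coeff_seriesSum]
  set N := n (Sum.inl ()) with hN
  have key : ∀ (s t : ℕ) (y : R d), β d ^ s * ((-β d)^t * y)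
      = ((-1:ℤ)^t) • (β d ^(s+t) * y) := by
    intro s t y
    rw [zsmul_eq_mul, Int.cast_pow, Int.cast_neg, Int.cast_one, neg_pow, pow_add]
    ring
  have lhs_eq : ∀ s ∈ Finset.range (N+1),
      MvPowerSeries.coeff n (Ring.choose q s • (β d ^ s * G d k (m + s)))
        = ∑ t ∈ Finset.range (N+1), Ring.choose q s *
            ((-1:ℤ)^t * MvPowerSeries.coeff n (β d ^(s+t) * Fcoeff d k (m + s + t))) := by
    intro s _
    rw [map_smul, smul_eq_mul, G, mul_seriesSum _ (Bdd_G k (m + s)), coeff_seriesSum,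
      Finset.mul_sum]
    refine Finset.sum_congr rfl fun t _ => ?_
    rw [key s t, map_smul, smul_eq_mul]
  rw [Finset.sum_congr rfl lhs_eq]
  rw [sum_sum_eq_conv N
    (fun s t => Ring.choose q s * ((-1:ℤ)^t * MvPowerSeries.coeff n (β d ^(s+t) * Fcoeff d k (m + s + t))))
    (fun s t hst => by
      show Ring.choose q s * ((-1:ℤ)^t *
        MvPowerSeries.coeff n (β d ^(s+t) * Fcoeff d k (m + s + t))) = 0
      rw [coeff_beta_pow_mul (by omega : n (Sum.inl ()) < s + t), mul_zero, mul_zero])]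
  refine Finset.sum_congr rfl fun r _ => ?_
  have hterm : ∀ s ∈ Finset.range (r+1),
      Ring.choose q s * ((-1:ℤ)^(r-s) *
        MvPowerSeries.coeff n (β d ^(s+(r-s)) * Fcoeff d k (m + (s:ℤ) + ((r-s:ℕ):ℤ))))
      = ((-1:ℤ)^(r-s) * Ring.choose q s) *
          MvPowerSeries.coeff n (β d ^ r * Fcoeff d k (m + r)) := by
    intro s hs
    rw [Finset.mem_range] at hs
    have h1 : s + (r - s) = r := by omega
    have h2 : m + (s:ℤ) + ((r-s:ℕ):ℤ) = m + r := by
      rw [Nat.cast_sub (by omega)]; ring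
    rw [h1, h2]
    ring
  rw [Finset.sum_congr rfl hterm, ← Finset.sum_mul, chooseConv, map_smul, smul_eq_mul]

lemma negbinom (l : Fin d) (e : ℕ) :
    (1 + β d * x d l)^e *
      seriesSum d (fun s => Ring.choose (-(e:ℤ)) s • (β d * x d l)^s) = 1 := by
  have hcoeff : ∀ (n : Idx d →₀ ℕ) (s : ℕ), n (Sum.inl ()) < s →
      MvPowerSeries.coeff n ((β d * x d l)^s) = 0 := by
    intro n s hs
    rw [mul_pow]
    exact coeff_beta_pow_mul hs _
  have hBdd : ∀ c : ℕ → ℤ, Bdd d (fun s => c s • (β d * x d l)^s) := by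
    intro c n s hs
    rw [map_smul, hcoeff n s hs, smul_zero]
  induction e with
  | zero =>
    rw [pow_zero, one_mul]
    apply MvPowerSeries.ext; intro n
    rw [coeff_seriesSum]
    have h0 : ∀ s ∈ Finset.range (n (Sum.inl ()) + 1), MvPowerSeries.coeff n
        (Ring.choose (-((0:ℕ):ℤ)) s • (β d * x d l)^s)
        = if s = 0 then MvPowerSeries.coeff n 1 else 0 := by
      intro s _
      rw [Nat.cast_zero, neg_zero, Ring.choose_zero_ite]
      by_cases hs : s = 0
      · subst hs; simp
      · rw [if_neg hs, if_neg hs, zero_smul, map_zero]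
    rw [Finset.sum_congr rfl h0, Finset.sum_ite_eq' (Finset.range (n (Sum.inl ()) + 1)) 0
      (fun _ => MvPowerSeries.coeff n 1), if_pos (Finset.mem_range.mpr (by omega))]
  | succ e ih =>
    have hstep : (1 + β d * x d l) *
        seriesSum d (fun s => Ring.choose (-((e+1:ℕ):ℤ)) s • (β d * x d l)^s)
          = seriesSum d (fun s => Ring.choose (-(e:ℤ)) s • (β d * x d l)^s) := by
      set p : ℤ := -((e+1:ℕ):ℤ) with hp
      have hpe : -(e:ℤ) = p + 1 := by rw [hp]; push_cast; ring
      rw [add_mul, one_mul, mul_seriesSum _ (hBdd _), seriesSum_add]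
      apply MvPowerSeries.ext; intro n
      rw [coeff_seriesSum, coeff_seriesSum]
      set N := n (Sum.inl ()) with hNdef
      have lhs_eq : ∀ s ∈ Finset.range (N+1), MvPowerSeries.coeff n
            (Ring.choose p s • (β d * x d l)^s + (β d * x d l) * (Ring.choose p s • (β d * x d l)^s))
          = Ring.choose p s * MvPowerSeries.coeff n ((β d * x d l)^s)
            + Ring.choose p s * MvPowerSeries.coeff n ((β d * x d l)^(s+1)) := by
        intro s _
        rw [map_add, map_smul, mul_smul_comm, map_smul, ← pow_succ', smul_eq_mul, smul_eq_mul]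
      rw [Finset.sum_congr rfl lhs_eq, Finset.sum_add_distrib]
      have h2 : ∑ s ∈ Finset.range (N+1),
            Ring.choose p s * MvPowerSeries.coeff n ((β d * x d l)^(s+1))
          = ∑ s ∈ Finset.range (N+1), (if s = 0 then 0
              else Ring.choose p (s-1) * MvPowerSeries.coeff n ((β d * x d l)^s)) := by
        rw [Finset.sum_range_succ
            (fun s => Ring.choose p s * MvPowerSeries.coeff n ((β d * x d l)^(s+1))),
          hcoeff n (N+1) (by omega), mul_zero, add_zero,
          Finset.sum_range_succ' (fun s => if s = 0 then (0:ℤ)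
            else Ring.choose p (s-1) * MvPowerSeries.coeff n ((β d * x d l)^s)) N]
        simp
      rw [h2, ← Finset.sum_add_distrib]
      refine Finset.sum_congr rfl fun s _ => ?_
      cases s with
      | zero => simp
      | succ s =>
        rw [if_neg (Nat.succ_ne_zero _), Nat.add_sub_cancel, hpe, Ring.choose_succ_succ,
          map_smul, smul_eq_mul]
        ring
    rw [pow_succ, mul_assoc]
    rw [show ((1 + β d * x d l) *
        seriesSum d (fun s => Ring.choose (-((e+1:ℕ):ℤ)) s • (β d * x d l)^s)) =
      seriesSum d (fun s => Ring.choose (-(e:ℤ)) s • (β d * x d l)^s) from hstep, ih]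

lemma rowsum (l : Fin d) (k e : ℕ) (m : Fin d → ℤ)
    (hm : ∀ j : Fin d, m j = (k:ℤ) - ((d - 1 - (j:ℕ) : ℕ) : ℤ)) :
    ∑ j : Fin d, ((-1:R d)^(d-1-(j:ℕ)) * esym d (Finset.univ.erase l) (d-1-(j:ℕ)) (x d)) *
        seriesSum d (fun s => Ring.choose (-(e:ℤ)) s • (β d ^ s * Fcoeff d k (m j + s)))
      = invOneAdd d l ^ e * ((∏ t : Fin d, (1 + β d * x d t)) * fb d (x d l) k) := by
  set A := ∏ t : Fin d, (1 + β d * x d t) with hA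
  have step1 : ∀ j : Fin d,
      ((-1:R d)^(d-1-(j:ℕ)) * esym d (Finset.univ.erase l) (d-1-(j:ℕ)) (x d)) *
        seriesSum d (fun s => Ring.choose (-(e:ℤ)) s • (β d ^ s * Fcoeff d k (m j + s)))
      = seriesSum d (fun s =>
          ((-1:R d)^(d-1-(j:ℕ)) * esym d (Finset.univ.erase l) (d-1-(j:ℕ)) (x d)) *
          (Ring.choose (-(e:ℤ)) s • (β d ^ s * Fcoeff d k (m j + s)))) :=
    fun j => mul_seriesSum _ (Bdd_smul_beta_pow _ _)
  rw [Finset.sum_congr rfl (fun j _ => step1 j), seriesSum_sum]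
  have key : ∀ s : ℕ,
      (∑ j : Fin d, ((-1:R d)^(d-1-(j:ℕ)) * esym d (Finset.univ.erase l) (d-1-(j:ℕ)) (x d)) *
        Fcoeff d k (m j + s))
      = A * (x d l ^ s * fb d (x d l) k) := by
    intro s
    have h0 : ∀ j : Fin d, (m j + (s:ℤ)) = ((k:ℤ) + s) - ((d-1-(j:ℕ) : ℕ) : ℤ) := by
      intro j; rw [hm j]; ring
    rw [Finset.sum_congr rfl (fun j _ => by rw [h0 j])]
    rw [Fin.sum_univ_eq_sum_range (fun jj => (-1:R d)^(d-1-jj) *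
      esym d (Finset.univ.erase l) (d-1-jj) (x d) *
      Fcoeff d k ((k:ℤ) + s - ((d-1-jj : ℕ):ℤ))) d]
    rw [Finset.sum_range_reflect (fun r => (-1:R d)^r *
      esym d (Finset.univ.erase l) r (x d) * Fcoeff d k ((k:ℤ) + s - (r:ℤ))) d]
    rw [Fexpand l k ((k:ℤ)+s) (by omega)]
    have h1 : ((k:ℤ) + s - k) = (s:ℤ) := by ring
    rw [h1, Int.toNat_natCast]
  have step3 : (fun s => ∑ j : Fin d,
        ((-1:R d)^(d-1-(j:ℕ)) * esym d (Finset.univ.erase l) (d-1-(j:ℕ)) (x d)) *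
        (Ring.choose (-(e:ℤ)) s • (β d ^ s * Fcoeff d k (m j + s))))
      = fun s => (A * fb d (x d l) k) * (Ring.choose (-(e:ℤ)) s • (β d * x d l)^s) := by
    funext s
    have h1 : ∀ j : Fin d,
        ((-1:R d)^(d-1-(j:ℕ)) * esym d (Finset.univ.erase l) (d-1-(j:ℕ)) (x d)) *
          (Ring.choose (-(e:ℤ)) s • (β d ^ s * Fcoeff d k (m j + s)))
        = Ring.choose (-(e:ℤ)) s • (β d ^ s *
            (((-1:R d)^(d-1-(j:ℕ)) * esym d (Finset.univ.erase l) (d-1-(j:ℕ)) (x d)) *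
              Fcoeff d k (m j + s))) := by
      intro j
      rw [mul_smul_comm]
      congr 1
      ring
    rw [Finset.sum_congr rfl (fun j _ => h1 j), ← Finset.smul_sum, ← Finset.mul_sum, key s,
      mul_smul_comm, mul_pow]
    congr 1
    ring
  rw [step3, ← mul_seriesSum _ (by
    intro n s hs
    rw [map_smul, mul_pow, coeff_beta_pow_mul hs, smul_zero])]
  have hunit : (1 + β d * x d l) * invOneAdd d l = 1 := by
    apply MvPowerSeries.mul_invOfUnit
    simp [β, x]
  have hSS : seriesSum d (fun s => Ring.choose (-(e:ℤ)) s • (β d * x d l)^s)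
      = invOneAdd d l ^ e := by
    calc seriesSum d (fun s => Ring.choose (-(e:ℤ)) s • (β d * x d l)^s)
        = (invOneAdd d l ^ e * (1 + β d * x d l)^e) *
            seriesSum d (fun s => Ring.choose (-(e:ℤ)) s • (β d * x d l)^s) := by
          rw [← mul_pow, mul_comm (invOneAdd d l) _, hunit, one_pow, one_mul]
      _ = invOneAdd d l ^ e * ((1 + β d * x d l)^e *
            seriesSum d (fun s => Ring.choose (-(e:ℤ)) s • (β d * x d l)^s)) := by
          rw [mul_assoc]
      _ = invOneAdd d l ^ e := by rw [negbinom l e, mul_one]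
  rw [hSS]
  ring


lemma one_add_mul_inv (l : Fin d) : (1 + β d * x d l) * invOneAdd d l = 1 := by
  apply MvPowerSeries.mul_invOfUnit
  simp [β, x]

lemma compl_singleton (l : Fin d) : ({l} : Finset (Fin d))ᶜ = Finset.univ.erase l := by
  ext t
  simp [Finset.mem_compl, Finset.mem_erase]

/-- Determinant formula (HM form): the bi-alternant determinant equals the Vandermonde
product times the Jacobi–Trudi type determinant with binomial coefficients `C(i-d, s)`. -/
theorem grothendieck_det_formula_HM
    (d : ℕ) (a : Fin d → ℤ) (ha : ∀ i : Fin d, 0 ≤ a i + d - ((i : ℕ) + 1)) :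
    Matrix.det (Matrix.of fun i j : Fin d =>
        fb d (x d j) (a i + d - ((i : ℕ) + 1)).toNat * (1 + β d * x d j) ^ (i : ℕ))
      = (∏ i : Fin d, ∏ j ∈ Finset.Ioi i, (x d i - x d j)) *
        Matrix.det (Matrix.of fun i j : Fin d =>
          seriesSum d fun s =>
            Ring.choose (((i : ℕ) : ℤ) + 1 - d) s •
              (β d ^ s *
                G d (a i + d - ((i : ℕ) + 1)).toNat (a i + (j : ℕ) - (i : ℕ) + s))) := by
  rcases Nat.eq_zero_or_pos d with hd0 | hd
  · subst hd0
    simp [Matrix.det_isEmpty]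
  have hki : ∀ i : Fin d, (((a i + d - ((i:ℕ)+1)).toNat : ℤ)) = a i + d - ((i:ℕ)+1) :=
    fun i => Int.toNat_of_nonneg (ha i)
  have hAinv : (∏ t : Fin d, (1 + β d * x d t)) * ∏ t : Fin d, invOneAdd d t = 1 := by
    rw [← Finset.prod_mul_distrib]
    exact Finset.prod_eq_one fun t _ => one_add_mul_inv t
  set H' : Matrix (Fin d) (Fin d) (R d) := Matrix.of fun i j =>
    seriesSum d fun s => Ring.choose (-(((d - (i:ℕ)) : ℕ):ℤ)) s •
      (β d ^ s * Fcoeff d (a i + d - ((i:ℕ)+1)).toNat (a i + (j:ℕ) - (i:ℕ) + s)) with hH'def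
  set Emat : Matrix (Fin d) (Fin d) (R d) := Matrix.of fun j l =>
    (-1:R d)^(d-1-(j:ℕ)) * esym d (Finset.univ.erase l) (d-1-(j:ℕ)) (x d) with hEdef
  -- the RHS matrix is H'
  have hM2 : (Matrix.of fun i j : Fin d =>
      seriesSum d fun s =>
        Ring.choose (((i : ℕ) : ℤ) + 1 - d) s •
          (β d ^ s *
            G d (a i + d - ((i : ℕ) + 1)).toNat (a i + (j : ℕ) - (i : ℕ) + s))) = H' := by
    ext i j
    simp only [Matrix.of_apply, hH'def]
    rw [Hent_eq ((a i + d - ((i:ℕ)+1)).toNat) (((i : ℕ) : ℤ) + 1 - d) (a i + (j:ℕ) - (i:ℕ))]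
    have hq : ((i : ℕ) : ℤ) + 1 - d - 1 = -(((d - (i:ℕ)) : ℕ):ℤ) := by
      have := i.isLt; omega
    rw [hq]
  -- row computation
  have hHE : ∀ i l : Fin d, (H' * Emat) i l
      = invOneAdd d l ^ (d - (i:ℕ)) *
          ((∏ t : Fin d, (1 + β d * x d t)) * fb d (x d l) ((a i + d - ((i:ℕ)+1)).toNat)) := by
    intro i l
    rw [Matrix.mul_apply]
    have hm : ∀ j : Fin d, a i + ((j:ℕ):ℤ) - ((i:ℕ):ℤ)
        = (((a i + d - ((i:ℕ)+1)).toNat : ℤ)) - ((d - 1 - (j:ℕ) : ℕ) : ℤ) := by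
      intro j
      have h1 := hki i
      have h2 := j.isLt
      have h3 := i.isLt
      omega
    have hrs := rowsum l ((a i + d - ((i:ℕ)+1)).toNat) (d - (i:ℕ))
      (fun j => a i + ((j:ℕ):ℤ) - ((i:ℕ):ℤ)) hm
    refine Eq.trans ?_ hrs
    refine Finset.sum_congr rfl fun j _ => ?_
    exact mul_comm _ _
  -- the LHS matrix is (H' * Emat) * diagonal
  have hM1 : (Matrix.of fun i j : Fin d =>
        fb d (x d j) (a i + d - ((i : ℕ) + 1)).toNat * (1 + β d * x d j) ^ (i : ℕ))
      = (H' * Emat) * Matrix.diagonal (fun l =>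
          (1 + β d * x d l)^d * ∏ t : Fin d, invOneAdd d t) := by
    apply Matrix.ext; intro i l
    rw [Matrix.mul_diagonal, hHE i l, Matrix.of_apply]
    have h1 : invOneAdd d l ^ (d-(i:ℕ)) * (1 + β d * x d l)^d = (1 + β d * x d l)^(i:ℕ) := by
      have hd2 : (d - (i:ℕ)) + (i:ℕ) = d := Nat.sub_add_cancel (Nat.le_of_lt i.isLt)
      have hsplit2 : (1 + β d * x d l)^d
          = (1 + β d * x d l)^(d-(i:ℕ)) * (1 + β d * x d l)^(i:ℕ) := by
        rw [← pow_add, hd2]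
      calc invOneAdd d l ^ (d-(i:ℕ)) * (1 + β d * x d l)^d
          = ((1 + β d * x d l) * invOneAdd d l)^(d-(i:ℕ)) * (1 + β d * x d l)^(i:ℕ) := by
            rw [hsplit2, mul_pow]
            ring
        _ = (1 + β d * x d l)^(i:ℕ) := by rw [one_add_mul_inv l, one_pow, one_mul]
    calc fb d (x d l) (a i + d - ((i : ℕ) + 1)).toNat * (1 + β d * x d l) ^ (i : ℕ)
        = (invOneAdd d l ^ (d-(i:ℕ)) * (1 + β d * x d l)^d) *
            (((∏ t : Fin d, (1 + β d * x d t)) * ∏ t : Fin d, invOneAdd d t) *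
              fb d (x d l) (a i + d - ((i : ℕ) + 1)).toNat) := by
          rw [h1, hAinv, one_mul, mul_comm]
      _ = invOneAdd d l ^ (d - (i:ℕ)) *
            ((∏ t : Fin d, (1 + β d * x d t)) * fb d (x d l) ((a i + d - ((i:ℕ)+1)).toNat)) *
            ((1 + β d * x d l)^d * ∏ t : Fin d, invOneAdd d t) := by
          ring
  -- determinant of the diagonal correction is 1
  have hdetD : (Matrix.diagonal (fun l : Fin d =>
      (1 + β d * x d l)^d * ∏ t : Fin d, invOneAdd d t)).det = 1 := by
    rw [Matrix.det_diagonal]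
    calc ∏ l : Fin d, ((1 + β d * x d l)^d * ∏ t : Fin d, invOneAdd d t)
        = (∏ l : Fin d, (1 + β d * x d l)^d) * (∏ t : Fin d, invOneAdd d t)^d := by
          rw [Finset.prod_mul_distrib, Finset.prod_const, Finset.card_univ, Fintype.card_fin]
      _ = ((∏ t : Fin d, (1 + β d * x d t)) * ∏ t : Fin d, invOneAdd d t)^d := by
          rw [mul_pow, Finset.prod_pow]
      _ = 1 := by rw [hAinv, one_pow]
  -- Vandermonde times Emat
  have hVE : Matrix.vandermonde (x d) * Emat
      = Matrix.diagonal (fun l => ∏ t ∈ Finset.univ.erase l, (x d l - x d t)) := by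
    apply Matrix.ext; intro l m2
    rw [Matrix.mul_apply, Matrix.diagonal_apply]
    have e0 : ∀ j : Fin d, Matrix.vandermonde (x d) l j * Emat j m2
        = x d l ^ (j:ℕ) * ((-1:R d)^(d-1-(j:ℕ)) *
            esym d (Finset.univ.erase m2) (d-1-(j:ℕ)) (x d)) := by
      intro j
      rw [Matrix.vandermonde_apply, hEdef, Matrix.of_apply]
    have hsum : ∑ j : Fin d, Matrix.vandermonde (x d) l j * Emat j m2
        = ∏ t ∈ Finset.univ.erase m2, (x d l - x d t) := by
      rw [Finset.sum_congr rfl (fun j _ => e0 j)]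
      rw [Fin.sum_univ_eq_sum_range (fun jj => x d l ^ jj * ((-1:R d)^(d-1-jj) *
        esym d (Finset.univ.erase m2) (d-1-jj) (x d))) d]
      have e1 : ∀ jj ∈ Finset.range d, x d l ^ jj * ((-1:R d)^(d-1-jj) *
            esym d (Finset.univ.erase m2) (d-1-jj) (x d))
          = (fun r => (-1:R d)^r * esym d (Finset.univ.erase m2) r (x d) * x d l ^ (d-1-r))
              (d-1-jj) := by
        intro jj hjj
        rw [Finset.mem_range] at hjj
        simp only []
        rw [show d - 1 - (d - 1 - jj) = jj from by omega]
        ring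
      rw [Finset.sum_congr rfl e1]
      beta_reduce
      rw [Finset.sum_range_reflect (fun r => (-1:R d)^r *
        esym d (Finset.univ.erase m2) r (x d) * x d l ^ (d-1-r)) d]
      have e2 := prod_sub_esym (Finset.univ.erase m2) (x d l)
      rw [card_erase, show d - 1 + 1 = d from by omega] at e2
      rw [← e2]
    rw [hsum]
    by_cases hlm : l = m2
    · subst hlm
      rw [if_pos rfl]
    · rw [if_neg hlm]
      exact Finset.prod_eq_zero (Finset.mem_erase.mpr ⟨hlm, Finset.mem_univ l⟩)
        (sub_self (x d l))
  -- determinant of Emat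
  have hdetE : Emat.det = ∏ i : Fin d, ∏ j ∈ Finset.Ioi i, (x d i - x d j) := by
    have hV : (Matrix.vandermonde (x d)).det ≠ 0 := by
      rw [Matrix.det_vandermonde]
      rw [Finset.prod_ne_zero_iff]
      intro i _
      rw [Finset.prod_ne_zero_iff]
      intro j hj
      rw [Finset.mem_Ioi] at hj
      intro hzero
      rw [sub_eq_zero] at hzero
      have hinj : (Sum.inr (Sum.inl j) : Idx d) = Sum.inr (Sum.inl i) :=
        MvPowerSeries.X_inj.mp hzero
      simp only [Sum.inr.injEq, Sum.inl.injEq] at hinj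
      rw [hinj] at hj
      exact lt_irrefl _ hj
    have hdd := congrArg Matrix.det hVE
    rw [Matrix.det_mul, Matrix.det_diagonal] at hdd
    have hsplit : ∏ l : Fin d, ∏ t ∈ Finset.univ.erase l, (x d l - x d t)
        = (Matrix.vandermonde (x d)).det *
            ∏ i : Fin d, ∏ j ∈ Finset.Ioi i, (x d i - x d j) := by
      rw [Matrix.det_vandermonde]
      have hoff := Finset.prod_prod_Ioi_mul_eq_prod_prod_off_diag
        (f := fun p q : Fin d => x d q - x d p)
      -- hoff : ∏ i, ∏ j ∈ Ioi i, (x d i - x d j) * (x d j - x d i) = ∏ i, ∏ j ∈ {i}ᶜ, (x d i - x d j)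
      have hoff2 : ∏ i : Fin d, ∏ j ∈ Finset.Ioi i, (x d i - x d j) * (x d j - x d i)
          = ∏ l : Fin d, ∏ t ∈ Finset.univ.erase l, (x d l - x d t) := by
        rw [hoff]
        refine Finset.prod_congr rfl fun i _ => ?_
        refine Finset.prod_congr ?_ fun j _ => rfl
        ext t
        simp
      calc ∏ l : Fin d, ∏ t ∈ Finset.univ.erase l, (x d l - x d t)
          = ∏ i : Fin d, ∏ j ∈ Finset.Ioi i, (x d i - x d j) * (x d j - x d i) := hoff2.symm
        _ = (∏ i : Fin d, ∏ j ∈ Finset.Ioi i, (x d j - x d i)) *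
              ∏ i : Fin d, ∏ j ∈ Finset.Ioi i, (x d i - x d j) := by
            rw [← Finset.prod_mul_distrib]
            refine Finset.prod_congr rfl fun i _ => ?_
            rw [← Finset.prod_mul_distrib]
            refine Finset.prod_congr rfl fun j _ => ?_
            ring
    rw [hsplit] at hdd
    exact mul_left_cancel₀ hV hdd
  rw [hM1, hM2, Matrix.det_mul, Matrix.det_mul, hdetD, mul_one, hdetE]
  ring

end GrothDet
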